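/- Fix t > 0, ε > 0, β, ρ ∈ ℝ, let δ = -|β| - |ρ|/t + √((|β| + |ρ|/t)² + 2ε/t), let γ₀ ≥ 0, let ν be a Borel measure on ℝ concentrated on (0,∞) with ∫ min(x,1) ν(dx) < ∞ and ∫_{x>1} e^{rx} ν(dx) < ∞ for all r < ε, and let π be a Borel probability measure on ℝ concentrated on (-∞,0). Then for every v ∈ ℝ with |v| < δ and every w ∈ ℝ one has Re Θ(v + iw) ≤ Θ(v), where Θ(u) = ∫_{(-∞,0)} ∫₀ᵗ θ_L(u·f_u(A,s)) ds π(dA) (in particular Θ(v) is real and finite). -/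

import Mathlib

open MeasureTheory
set_option maxHeartbeats 2000000

/-- `u·f_u(A,s) = ((e^{A(t-s)} - 1)/A)(uβ + u²/2) + ρu` for complex `u`. -/
noncomputable def ufc (t β ρ : ℝ) (u : ℂ) (A s : ℝ) : ℂ :=
  (((Real.exp (A * (t - s)) - 1) / A : ℝ) : ℂ) * (u * (β : ℂ) + u ^ 2 / 2) + (ρ : ℂ) * u

/-- `θ_L(z) = γ₀ z + ∫_{(0,∞)} (e^{zx} - 1) ν(dx)`. -/
noncomputable def thetaL (γ₀ : ℝ) (ν : Measure ℝ) (z : ℂ) : ℂ :=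
  (γ₀ : ℂ) * z + ∫ x in Set.Ioi (0 : ℝ), (Complex.exp (z * (x : ℂ)) - 1) ∂ν

/-- `Θ(u) = ∫_{(-∞,0)} ∫₀ᵗ θ_L(u·f_u(A,s)) ds π(dA)`. -/
noncomputable def Theta (t β ρ γ₀ : ℝ) (ν π : Measure ℝ) (u : ℂ) : ℂ :=
  ∫ A in Set.Iio (0 : ℝ), (∫ s in (0 : ℝ)..t, thetaL γ₀ ν (ufc t β ρ u A s)) ∂π

private lemma norm_cexp_sub_one_le (w : ℂ) : ‖Complex.exp w - 1‖ ≤ ‖w‖ * Real.exp ‖w‖ := by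
  have h : ∀ z ∈ Metric.closedBall (0:ℂ) ‖w‖,
      HasDerivWithinAt Complex.exp (Complex.exp z) (Metric.closedBall 0 ‖w‖) z :=
    fun z _ => (Complex.hasDerivAt_exp z).hasDerivWithinAt
  have hb : ∀ z ∈ Metric.closedBall (0:ℂ) ‖w‖, ‖Complex.exp z‖ ≤ Real.exp ‖w‖ := by
    intro z hz
    simp only [Metric.mem_closedBall, dist_zero_right] at hz
    rw [Complex.norm_exp]
    exact Real.exp_le_exp.2 ((le_abs_self _).trans ((Complex.abs_re_le_norm z).trans hz))
  have hmem : w ∈ Metric.closedBall (0:ℂ) ‖w‖ := by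
    simp [Metric.mem_closedBall, dist_zero_right]
  have := (convex_closedBall (0:ℂ) ‖w‖).norm_image_sub_le_of_norm_hasDerivWithin_le h hb
      (Metric.mem_closedBall_self (norm_nonneg w)) hmem
  simpa [Complex.exp_zero, mul_comm] using this

private lemma delta_bound {t ε β ρ v : ℝ} (ht : 0 < t) (hε : 0 < ε)
    (hv : |v| < -|β| - |ρ| / t + Real.sqrt ((|β| + |ρ| / t) ^ 2 + 2 * ε / t)) :
    t * (|v| * |β| + v ^ 2 / 2) + |ρ| * |v| < ε := by
  set D := |β| + |ρ| / t with hD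
  have hD0 : 0 ≤ D := by positivity
  have h1 : |v| + D < Real.sqrt (D ^ 2 + 2 * ε / t) := by
    rw [hD]; linarith [hv]
  have h2 : (|v| + D) ^ 2 < D ^ 2 + 2 * ε / t :=
    (Real.lt_sqrt (by positivity)).1 h1
  have h3 : v ^ 2 + 2 * D * |v| < 2 * ε / t := by nlinarith [sq_abs v]
  have h4 : t * (v ^ 2 + 2 * D * |v|) < 2 * ε := by
    have := (mul_lt_mul_iff_right₀ ht).2 h3
    calc t * (v ^ 2 + 2 * D * |v|) < t * (2 * ε / t) := this
      _ = 2 * ε := by field_simp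
  have h5 : t * D = t * |β| + |ρ| := by rw [hD]; field_simp
  have h6 : t * v ^ 2 + 2 * (t * |β| + |ρ|) * |v| < 2 * ε := by
    calc t * v ^ 2 + 2 * (t * |β| + |ρ|) * |v| = t * (v ^ 2 + 2 * D * |v|) := by
          rw [← h5]; ring
      _ < 2 * ε := h4
  nlinarith [h6]

private lemma c_bounds {t A s : ℝ} (hA : A < 0) (hs0 : 0 ≤ s) (hst : s ≤ t) :
    0 ≤ (Real.exp (A * (t - s)) - 1) / A ∧ (Real.exp (A * (t - s)) - 1) / A ≤ t := by
  have hy : A * (t - s) ≤ 0 := mul_nonpos_of_nonpos_of_nonneg hA.le (by linarith)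
  have he : Real.exp (A * (t - s)) ≤ 1 := Real.exp_le_one_iff.2 hy
  constructor
  · rw [le_div_iff_of_neg hA, zero_mul]; linarith
  · rw [div_le_iff_of_neg hA]
    nlinarith [Real.add_one_le_exp (A * (t - s)), mul_nonneg (neg_nonneg.2 hA.le) hs0]

private lemma ufc_real (t β ρ v A s : ℝ) :
    ufc t β ρ (v:ℂ) A s =
      (((Real.exp (A*(t-s)) - 1)/A * (v*β + v^2/2) + ρ*v : ℝ) : ℂ) := by
  unfold ufc; push_cast; ring

private lemma ufc_re (t β ρ v w A s : ℝ) :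
    (ufc t β ρ ((v:ℂ) + (w:ℂ)*Complex.I) A s).re =
      (Real.exp (A*(t-s)) - 1)/A * (v*β + (v^2 - w^2)/2) + ρ*v := by
  set c := (Real.exp (A*(t-s)) - 1)/A
  have h : ufc t β ρ ((v:ℂ) + (w:ℂ)*Complex.I) A s =
      ((c*(v*β + (v^2-w^2)/2) + ρ*v : ℝ) : ℂ) +
      ((c*(w*β + v*w) + ρ*w : ℝ) : ℂ) * Complex.I := by
    unfold ufc; change (c:ℂ) * _ + _ = _; push_cast
    linear_combination ((c:ℂ) * (w:ℂ)^2/2) * Complex.I_sq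
  rw [h]; simp [← Complex.ofReal_pow]

private lemma ufc_norm_le (t β ρ : ℝ) (u : ℂ) (A s : ℝ)
    (hc0 : 0 ≤ (Real.exp (A*(t-s)) - 1)/A) (hct : (Real.exp (A*(t-s)) - 1)/A ≤ t) :
    ‖ufc t β ρ u A s‖ ≤ t * (‖u‖ * |β| + ‖u‖ ^ 2 / 2) + |ρ| * ‖u‖ := by
  set c := (Real.exp (A*(t-s)) - 1)/A
  have h1 : ‖ufc t β ρ u A s‖ ≤ c * ‖u * (β:ℂ) + u^2/2‖ + |ρ| * ‖u‖ := by
    unfold ufc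
    refine (norm_add_le _ _).trans ?_
    gcongr
    · rw [norm_mul, Complex.norm_real, Real.norm_eq_abs, abs_of_nonneg hc0]
    · rw [norm_mul, Complex.norm_real, Real.norm_eq_abs]
  have h2 : ‖u * (β:ℂ) + u^2/2‖ ≤ ‖u‖ * |β| + ‖u‖ ^ 2 / 2 := by
    refine (norm_add_le _ _).trans ?_
    gcongr
    · rw [norm_mul, Complex.norm_real, Real.norm_eq_abs]
    · rw [norm_div, norm_pow]; simp
  have h3 : 0 ≤ ‖u‖ * |β| + ‖u‖ ^ 2 / 2 := by positivity
  nlinarith [mul_le_mul_of_nonneg_left h2 hc0, mul_le_mul_of_nonneg_right hct h3]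

private lemma ufc_key {t β ρ : ℝ} {v w A s : ℝ} (hA : A < 0)
    (hs : s ∈ Set.Icc (0:ℝ) t) :
    (ufc t β ρ ((v:ℂ) + (w:ℂ)*Complex.I) A s).re ≤ (ufc t β ρ (v:ℂ) A s).re ∧
    (ufc t β ρ (v:ℂ) A s).re ≤ t * (|v| * |β| + v ^ 2 / 2) + |ρ| * |v| := by
  obtain ⟨hc0, hct⟩ := c_bounds hA hs.1 hs.2
  rw [ufc_re, ufc_real, Complex.ofReal_re]
  constructor
  · nlinarith [mul_nonneg hc0 (sq_nonneg w)]
  · have h1 : v*β + v^2/2 ≤ |v| * |β| + v^2/2 := by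
      nlinarith [(le_abs_self (v*β)).trans_eq (abs_mul v β)]
    have h2 : (0:ℝ) ≤ |v| * |β| + v^2/2 := by positivity
    nlinarith [mul_le_mul_of_nonneg_left h1 hc0, mul_le_mul_of_nonneg_right hct h2,
      (le_abs_self (ρ*v)).trans_eq (abs_mul ρ v)]

/-- the dominating function -/
noncomputable def bnd (r M x : ℝ) : ℝ :=
  if x ≤ 1 then (M * Real.exp M) * x else Real.exp (r * x) + 1

private lemma one_integrable {ν : Measure ℝ} (hmin : Integrable (fun x : ℝ => min x 1) ν) :
    IntegrableOn (fun _ : ℝ => (1:ℝ)) (Set.Ioi 1) ν := by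
  refine (hmin.integrableOn).congr_fun (fun x hx => ?_) measurableSet_Ioi
  simp [min_eq_right (le_of_lt (Set.mem_Ioi.1 hx))]

private lemma bnd_integrable {ε : ℝ} {ν : Measure ℝ}
    (hmin : Integrable (fun x : ℝ => min x 1) ν)
    (hexp : ∀ r : ℝ, r < ε → IntegrableOn (fun x : ℝ => Real.exp (r * x)) {x | 1 < x} ν)
    {r M : ℝ} (hr : r < ε) :
    IntegrableOn (bnd r M) (Set.Ioi 0) ν := by
  rw [show Set.Ioi (0:ℝ) = Set.Ioc 0 1 ∪ Set.Ioi 1 from (Set.Ioc_union_Ioi_eq_Ioi zero_le_one).symm]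
  refine IntegrableOn.union ?_ ?_
  · refine ((hmin.const_mul (M * Real.exp M)).integrableOn).congr_fun
      (fun x hx => ?_) measurableSet_Ioc
    simp [bnd, if_pos hx.2, min_eq_left hx.2]
  · have h1 : IntegrableOn (fun x : ℝ => Real.exp (r * x) + 1) (Set.Ioi 1) ν :=
      Integrable.add (hexp r hr) (one_integrable hmin)
    refine h1.congr_fun (fun x hx => ?_) measurableSet_Ioi
    simp [bnd, if_neg (not_le.2 (Set.mem_Ioi.1 hx))]

private lemma kernel_le_bnd {r M : ℝ} (hM : 0 ≤ M) {z : ℂ} (hre : z.re ≤ r) (hz : ‖z‖ ≤ M)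
    {x : ℝ} (hx : 0 < x) : ‖Complex.exp (z * (x:ℂ)) - 1‖ ≤ bnd r M x := by
  unfold bnd
  by_cases h1 : x ≤ 1
  · rw [if_pos h1]
    have hn : ‖z * (x:ℂ)‖ = ‖z‖ * x := by
      rw [norm_mul, Complex.norm_real, Real.norm_eq_abs, abs_of_pos hx]
    have e1 : ‖z * (x:ℂ)‖ ≤ M * x := by rw [hn]; exact mul_le_mul_of_nonneg_right hz hx.le
    have e2 : ‖z * (x:ℂ)‖ ≤ M := e1.trans (by nlinarith)
    refine (norm_cexp_sub_one_le _).trans ?_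
    have := Real.exp_le_exp.2 e2
    nlinarith [Real.exp_pos M, norm_nonneg (z * (x:ℂ)), Real.exp_pos ‖z * (x:ℂ)‖]
  · rw [if_neg h1]
    have h2 : ‖Complex.exp (z * (x:ℂ))‖ = Real.exp (z.re * x) := by
      rw [Complex.norm_exp]
      congr 1
      simp [Complex.mul_re]
    calc ‖Complex.exp (z * (x:ℂ)) - 1‖ ≤ ‖Complex.exp (z * (x:ℂ))‖ + 1 := by
          simpa using norm_sub_le (Complex.exp (z * (x:ℂ))) 1
      _ ≤ Real.exp (r * x) + 1 := by
          rw [h2]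
          exact add_le_add_left
            (Real.exp_le_exp.2 (mul_le_mul_of_nonneg_right hre hx.le)) 1

private lemma kernel_integrable {ε : ℝ} {ν : Measure ℝ}
    (hmin : Integrable (fun x : ℝ => min x 1) ν)
    (hexp : ∀ r : ℝ, r < ε → IntegrableOn (fun x : ℝ => Real.exp (r * x)) {x | 1 < x} ν)
    {z : ℂ} (hz : z.re < ε) :
    IntegrableOn (fun x : ℝ => Complex.exp (z * (x:ℂ)) - 1) (Set.Ioi 0) ν := by
  refine Integrable.mono' (bnd_integrable hmin hexp (r := (z.re + ε)/2) (M := ‖z‖) (by linarith))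
    ?_ ?_
  · exact (Continuous.aestronglyMeasurable (by continuity)).restrict
  · refine (ae_restrict_iff' measurableSet_Ioi).2 (ae_of_all _ fun x hx => ?_)
    exact kernel_le_bnd (norm_nonneg z) (by linarith) le_rfl hx

private lemma thetaL_ofReal (γ₀ : ℝ) (ν : Measure ℝ) (g : ℝ) :
    thetaL γ₀ ν (g:ℂ) =
      ((γ₀ * g + ∫ x in Set.Ioi (0:ℝ), (Real.exp (g * x) - 1) ∂ν : ℝ) : ℂ) := by
  unfold thetaL
  have h : ∀ x : ℝ, Complex.exp ((g:ℂ) * (x:ℂ)) - 1 = ((Real.exp (g*x) - 1 : ℝ) : ℂ) := by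
    intro x; rw [← Complex.ofReal_mul, ← Complex.ofReal_exp]; push_cast; ring
  simp_rw [h]
  have h2 : ∫ x in Set.Ioi (0:ℝ), ((Real.exp (g*x) - 1 : ℝ) : ℂ) ∂ν
      = ((∫ x in Set.Ioi (0:ℝ), (Real.exp (g*x) - 1) ∂ν : ℝ) : ℂ) := integral_ofReal
  rw [h2]; push_cast; ring

private lemma re_thetaL_le {ε γ₀ : ℝ} {ν : Measure ℝ} (hγ₀ : 0 ≤ γ₀)
    (hmin : Integrable (fun x : ℝ => min x 1) ν)
    (hexp : ∀ r : ℝ, r < ε → IntegrableOn (fun x : ℝ => Real.exp (r * x)) {x | 1 < x} ν)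
    {z : ℂ} {g : ℝ} (hz : z.re ≤ g) (hg : g < ε) :
    (thetaL γ₀ ν z).re ≤ (thetaL γ₀ ν (g:ℂ)).re := by
  have hzε : z.re < ε := lt_of_le_of_lt hz hg
  have hint : IntegrableOn (fun x : ℝ => Complex.exp (z * (x:ℂ)) - 1) (Set.Ioi 0) ν :=
    kernel_integrable hmin hexp hzε
  have hintg : IntegrableOn (fun x : ℝ => Real.exp (g * x) - 1) (Set.Ioi 0) ν := by
    have h0 : IntegrableOn (fun x : ℝ => RCLike.re (Complex.exp ((g:ℂ) * (x:ℂ)) - 1))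
        (Set.Ioi 0) ν := (kernel_integrable hmin hexp (z := (g:ℂ)) (by simpa using hg)).re
    refine h0.congr_fun (fun x hx => ?_) measurableSet_Ioi
    simp only [RCLike.re_to_complex, ← Complex.ofReal_mul, ← Complex.ofReal_exp,
      Complex.sub_re, Complex.ofReal_re, Complex.one_re]
  rw [thetaL_ofReal, Complex.ofReal_re]
  unfold thetaL
  rw [Complex.add_re, Complex.mul_re]
  simp only [Complex.ofReal_re, Complex.ofReal_im, zero_mul, sub_zero]
  have h1 : γ₀ * z.re ≤ γ₀ * g := mul_le_mul_of_nonneg_left hz hγ₀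
  have h2 : (∫ x in Set.Ioi (0:ℝ), (Complex.exp (z * (x:ℂ)) - 1) ∂ν).re
      = ∫ x in Set.Ioi (0:ℝ), RCLike.re (Complex.exp (z * (x:ℂ)) - 1) ∂ν :=
    (integral_re hint).symm
  rw [h2]
  have h3 : ∫ x in Set.Ioi (0:ℝ), RCLike.re (Complex.exp (z * (x:ℂ)) - 1) ∂ν
      ≤ ∫ x in Set.Ioi (0:ℝ), (Real.exp (g * x) - 1) ∂ν := by
    refine setIntegral_mono_on hint.re hintg measurableSet_Ioi (fun x hx => ?_)
    have hre : RCLike.re (Complex.exp (z * (x:ℂ)) - 1)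
        = Real.exp (z.re * x) * Real.cos (z.im * x) - 1 := by
      simp [Complex.exp_re, Complex.mul_re, Complex.mul_im]
    rw [hre]
    have hc : Real.cos (z.im * x) ≤ 1 := Real.cos_le_one _
    have he : Real.exp (z.re * x) ≤ Real.exp (g * x) :=
      Real.exp_le_exp.2 (mul_le_mul_of_nonneg_right hz (le_of_lt hx))
    nlinarith [Real.exp_pos (z.re * x), Real.neg_one_le_cos (z.im * x)]
  linarith

private lemma norm_thetaL_le {ε γ₀ : ℝ} {ν : Measure ℝ} (hγ₀ : 0 ≤ γ₀)
    (hmin : Integrable (fun x : ℝ => min x 1) ν)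
    (hexp : ∀ r : ℝ, r < ε → IntegrableOn (fun x : ℝ => Real.exp (r * x)) {x | 1 < x} ν)
    {r M : ℝ} (hr : r < ε) (hM : 0 ≤ M) {z : ℂ} (hre : z.re ≤ r) (hz : ‖z‖ ≤ M) :
    ‖thetaL γ₀ ν z‖ ≤ γ₀ * M + ∫ x in Set.Ioi (0:ℝ), bnd r M x ∂ν := by
  unfold thetaL
  refine (norm_add_le _ _).trans (add_le_add ?_ ?_)
  · rw [norm_mul, Complex.norm_real, Real.norm_eq_abs, abs_of_nonneg hγ₀]
    exact mul_le_mul_of_nonneg_left hz hγ₀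
  · refine norm_integral_le_of_norm_le (bnd_integrable hmin hexp hr) ?_
    exact (ae_restrict_iff' measurableSet_Ioi).2
      (ae_of_all _ fun x hx => kernel_le_bnd hM hre hz hx)

private lemma thetaL_contAt {ε γ₀ : ℝ} {ν : Measure ℝ}
    (hmin : Integrable (fun x : ℝ => min x 1) ν)
    (hexp : ∀ r : ℝ, r < ε → IntegrableOn (fun x : ℝ => Real.exp (r * x)) {x | 1 < x} ν)
    {z₀ : ℂ} (h : z₀.re < ε) : ContinuousAt (thetaL γ₀ ν) z₀ := by
  unfold thetaL
  refine ContinuousAt.add (by fun_prop) ?_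
  have hre : ∀ᶠ z : ℂ in nhds z₀, z.re < (z₀.re + ε)/2 :=
    Filter.Tendsto.eventually_lt_const (by linarith) Complex.continuous_re.continuousAt
  have hnorm : ∀ᶠ z : ℂ in nhds z₀, ‖z‖ < ‖z₀‖ + 1 :=
    Filter.Tendsto.eventually_lt_const (by linarith) continuous_norm.continuousAt
  refine continuousAt_of_dominated ?_ ?_
    (bnd_integrable hmin hexp (r := (z₀.re + ε)/2) (M := ‖z₀‖ + 1) (by linarith)) ?_
  · exact Filter.Eventually.of_forall fun z =>
      (Continuous.aestronglyMeasurable (by continuity)).restrict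
  · filter_upwards [hre, hnorm] with z h1 h2
    refine (ae_restrict_iff' measurableSet_Ioi).2 (ae_of_all _ fun x hx => ?_)
    exact kernel_le_bnd (by positivity) h1.le h2.le hx
  · exact ae_of_all _ fun x =>
      (by continuity : Continuous fun z : ℂ => Complex.exp (z * (x:ℂ)) - 1).continuousAt

private lemma ufc_contAt (t β ρ : ℝ) (u : ℂ) {A s : ℝ} (hA : A ≠ 0) :
    ContinuousAt (fun p : ℝ × ℝ => ufc t β ρ u p.1 p.2) (A, s) := by
  unfold ufc
  have h1 : ContinuousAt (fun p : ℝ × ℝ => (Real.exp (p.1*(t-p.2)) - 1)/p.1) (A, s) := by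
    refine ContinuousAt.div (by fun_prop) (by fun_prop) ?_
    simpa using hA
  exact (((Complex.continuous_ofReal.continuousAt.comp h1).mul continuousAt_const).add
    continuousAt_const)

theorem stmt_11 (t ε β ρ γ₀ : ℝ) (ht : 0 < t) (hε : 0 < ε) (hγ₀ : 0 ≤ γ₀)
    (ν : Measure ℝ) (hν : ν (Set.Ioi (0 : ℝ))ᶜ = 0)
    (hmin : Integrable (fun x : ℝ => min x 1) ν)
    (hexp : ∀ r : ℝ, r < ε → IntegrableOn (fun x : ℝ => Real.exp (r * x)) {x | 1 < x} ν)
    (π : Measure ℝ) [IsProbabilityMeasure π] (hπ : π (Set.Iio (0 : ℝ))ᶜ = 0) :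
    ∀ v w : ℝ, |v| < -|β| - |ρ| / t + Real.sqrt ((|β| + |ρ| / t) ^ 2 + 2 * ε / t) →
      (Theta t β ρ γ₀ ν π ((v : ℂ) + (w : ℂ) * Complex.I)).re ≤
          (Theta t β ρ γ₀ ν π (v : ℂ)).re ∧
        (Theta t β ρ γ₀ ν π (v : ℂ)).im = 0 := by
  intro v w hv
  set r₀ : ℝ := t * (|v| * |β| + v ^ 2 / 2) + |ρ| * |v| with hr₀def
  have hr₀ε : r₀ < ε := delta_bound ht hε hv
  -- generic facts for a u with bounded real part
  have key : ∀ u : ℂ, (∀ A : ℝ, A < 0 → ∀ s ∈ Set.Icc (0:ℝ) t, (ufc t β ρ u A s).re ≤ r₀) →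
      (Integrable (fun A => ∫ s in (0:ℝ)..t, thetaL γ₀ ν (ufc t β ρ u A s))
        (π.restrict (Set.Iio 0))) ∧
      (∀ A : ℝ, A < 0 →
        IntervalIntegrable (fun s => thetaL γ₀ ν (ufc t β ρ u A s)) volume 0 t) := by
    intro u hu
    set M : ℝ := t * (‖u‖ * |β| + ‖u‖ ^ 2 / 2) + |ρ| * ‖u‖ with hMdef
    have hM0 : 0 ≤ M := by positivity
    have hnorm : ∀ A : ℝ, A < 0 → ∀ s ∈ Set.Icc (0:ℝ) t, ‖ufc t β ρ u A s‖ ≤ M := by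
      intro A hA s hs
      obtain ⟨hc0, hct⟩ := c_bounds hA hs.1 hs.2
      exact ufc_norm_le t β ρ u A s hc0 hct
    set K : ℝ := γ₀ * M + ∫ x in Set.Ioi (0:ℝ), bnd r₀ M x ∂ν with hKdef
    have hbound : ∀ A : ℝ, A < 0 → ∀ s ∈ Set.Icc (0:ℝ) t,
        ‖thetaL γ₀ ν (ufc t β ρ u A s)‖ ≤ K :=
      fun A hA s hs => norm_thetaL_le hγ₀ hmin hexp hr₀ε hM0 (hu A hA s hs) (hnorm A hA s hs)
    have hIccIoc : Set.uIoc (0:ℝ) t ⊆ Set.Icc (0:ℝ) t := by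
      rw [Set.uIoc_of_le ht.le]
      exact Set.Ioc_subset_Icc_self
    have hcontOn : ∀ A : ℝ, A < 0 →
        ContinuousOn (fun s => thetaL γ₀ ν (ufc t β ρ u A s)) (Set.Icc (0:ℝ) t) := by
      intro A hA
      intro s hs
      have h1 : ContinuousAt (fun s => thetaL γ₀ ν (ufc t β ρ u A s)) s := by
        refine ContinuousAt.comp (thetaL_contAt hmin hexp (lt_of_le_of_lt (hu A hA s hs) hr₀ε)) ?_
        exact (ufc_contAt t β ρ u hA.ne).comp
          ((continuous_const.prodMk continuous_id).continuousAt)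
      exact h1.continuousWithinAt
    have hII : ∀ A : ℝ, A < 0 →
        IntervalIntegrable (fun s => thetaL γ₀ ν (ufc t β ρ u A s)) volume 0 t := by
      intro A hA
      exact ((hcontOn A hA).mono (by rw [Set.uIcc_of_le ht.le])).intervalIntegrable
    refine ⟨?_, hII⟩
    -- continuity of the inner integral in A on (-∞, 0)
    have hGcont : ∀ A : ℝ, A < 0 →
        ContinuousAt (fun A' => ∫ s in (0:ℝ)..t, thetaL γ₀ ν (ufc t β ρ u A' s)) A := by
      intro A hA
      have hnbhd : Set.Iio (0:ℝ) ∈ nhds A := Iio_mem_nhds hA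
      refine intervalIntegral.continuousAt_of_dominated_interval ?_ ?_
        (intervalIntegrable_const (c := K)) ?_
      · filter_upwards [hnbhd] with A' hA'
        exact ((hcontOn A' hA').mono hIccIoc).aestronglyMeasurable measurableSet_uIoc
      · filter_upwards [hnbhd] with A' hA'
        exact ae_of_all _ fun s hs => hbound A' hA' s (hIccIoc hs)
      · refine ae_of_all _ fun s hs => ?_
        have hsIcc : s ∈ Set.Icc (0:ℝ) t := hIccIoc hs
        have hpair : ContinuousAt (fun A' : ℝ => ((A', s) : ℝ × ℝ)) A :=
          (continuous_id.prodMk continuous_const).continuousAt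
        have hufc : ContinuousAt (fun A' : ℝ => ufc t β ρ u A' s) A :=
          ContinuousAt.comp (x := A) (f := fun A' : ℝ => ((A', s) : ℝ × ℝ))
            (ufc_contAt t β ρ u hA.ne) hpair
        exact ContinuousAt.comp (x := A) (f := fun A' : ℝ => ufc t β ρ u A' s)
          (thetaL_contAt hmin hexp (lt_of_le_of_lt (hu A hA s hsIcc) hr₀ε)) hufc
    have hGnorm : ∀ A : ℝ, A < 0 →
        ‖∫ s in (0:ℝ)..t, thetaL γ₀ ν (ufc t β ρ u A s)‖ ≤ K * |t - 0| := by
      intro A hA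
      exact intervalIntegral.norm_integral_le_of_norm_le_const
        (fun s hs => hbound A hA s (hIccIoc hs))
    refine Integrable.mono'
      ((integrableOn_const (measure_lt_top π _).ne :
        IntegrableOn (fun _ : ℝ => K * |t - 0|) (Set.Iio 0) π)) ?_ ?_
    · refine ContinuousOn.aestronglyMeasurable (fun A hA => ?_) measurableSet_Iio
      exact (hGcont A hA).continuousWithinAt
    · exact (ae_restrict_iff' measurableSet_Iio).2 (ae_of_all _ fun A hA => hGnorm A hA)
  -- the two specific values of u
  have hu1 : ∀ A : ℝ, A < 0 → ∀ s ∈ Set.Icc (0:ℝ) t,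
      (ufc t β ρ ((v:ℂ) + (w:ℂ)*Complex.I) A s).re ≤ r₀ :=
    fun A hA s hs => ((ufc_key hA hs).1).trans (ufc_key (w := w) hA hs).2
  have hu2 : ∀ A : ℝ, A < 0 → ∀ s ∈ Set.Icc (0:ℝ) t, (ufc t β ρ (v:ℂ) A s).re ≤ r₀ := by
    intro A hA s hs
    exact (ufc_key (w := w) hA hs).2
  obtain ⟨hInt1, hII1⟩ := key ((v:ℂ) + (w:ℂ)*Complex.I) hu1
  obtain ⟨hInt2, hII2⟩ := key (v:ℂ) hu2
  -- inner pointwise comparison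
  have hinner : ∀ A : ℝ, A < 0 →
      (∫ s in (0:ℝ)..t, thetaL γ₀ ν (ufc t β ρ ((v:ℂ) + (w:ℂ)*Complex.I) A s)).re ≤
      (∫ s in (0:ℝ)..t, thetaL γ₀ ν (ufc t β ρ (v:ℂ) A s)).re := by
    intro A hA
    have e1 := Complex.reCLM.intervalIntegral_comp_comm (hII1 A hA)
    have e2 := Complex.reCLM.intervalIntegral_comp_comm (hII2 A hA)
    simp only [Complex.reCLM_apply] at e1 e2
    rw [← e1, ← e2]
    refine intervalIntegral.integral_mono_on ht.le
      ⟨(hII1 A hA).1.re, (hII1 A hA).2.re⟩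
      ⟨(hII2 A hA).1.re, (hII2 A hA).2.re⟩ ?_
    intro s hs
    have h1 := (ufc_key (t := t) (β := β) (ρ := ρ) (v := v) (w := w) hA hs).1
    have h2 := (ufc_key (t := t) (β := β) (ρ := ρ) (v := v) (w := w) hA hs).2
    calc (thetaL γ₀ ν (ufc t β ρ ((v:ℂ) + (w:ℂ)*Complex.I) A s)).re
        ≤ (thetaL γ₀ ν (((ufc t β ρ (v:ℂ) A s).re : ℝ) : ℂ)).re := by
          refine re_thetaL_le hγ₀ hmin hexp h1 (lt_of_le_of_lt h2 hr₀ε)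
      _ = (thetaL γ₀ ν (ufc t β ρ (v:ℂ) A s)).re := by
          congr 2
          rw [ufc_real, Complex.ofReal_re]
  have himzero : ∀ A : ℝ, A < 0 →
      (∫ s in (0:ℝ)..t, thetaL γ₀ ν (ufc t β ρ (v:ℂ) A s)).im = 0 := by
    intro A hA
    have e2 := Complex.imCLM.intervalIntegral_comp_comm (hII2 A hA)
    simp only [Complex.imCLM_apply] at e2
    rw [← e2]
    have hz : ∀ s : ℝ, (thetaL γ₀ ν (ufc t β ρ (v:ℂ) A s)).im = 0 := by
      intro s
      rw [ufc_real t β ρ v A s, thetaL_ofReal γ₀ ν _]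
      exact Complex.ofReal_im _
    simp_rw [hz]
    simp
  constructor
  · unfold Theta
    have e1 := Complex.reCLM.integral_comp_comm hInt1
    have e2 := Complex.reCLM.integral_comp_comm hInt2
    have m1 := Complex.reCLM.integrable_comp hInt1
    have m2 := Complex.reCLM.integrable_comp hInt2
    simp only [Complex.reCLM_apply] at e1 e2 m1 m2
    rw [← e1, ← e2]
    refine integral_mono_ae m1 m2 ?_
    refine (ae_restrict_iff' measurableSet_Iio).2 (ae_of_all _ fun A hA => hinner A hA)
  · unfold Theta
    have e2 := Complex.imCLM.integral_comp_comm hInt2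
    simp only [Complex.imCLM_apply] at e2
    rw [← e2]
    rw [integral_congr_ae ((ae_restrict_iff' measurableSet_Iio).2
      (ae_of_all _ fun A hA => himzero A hA))]
    simp
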